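/- arXiv:1905.02764 — 2 statements merged into one kernel-verified Lean document; each statement's English description precedes it below -/
import Mathlib

section
/- Let Ω₁, Ω₂ ⊂ ℝⁿ be bounded connected open sets, and let Γ be a nonempty connected open subset of ∂Ω₁ ∩ ∂Ω₂. Let G be the connected component of Ω₁ ∩ Ω₂ whose boundary contains Γ. If Ω₁ ≠ Ω₂, then (possibly after interchanging Ω₁ and Ω₂) the set ∂G ∩ Ω₁ ∩ (∂Ω₂ \ Γ) is nonempty. -/
private lemma aux_boundary {n : ℕ}
    (Ω₁ Ω₂ Γ G : Set (EuclideanSpace ℝ (Fin n)))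
    (hΩ₁open : IsOpen Ω₁) (hΩ₂open : IsOpen Ω₂)
    (hΩ₁conn : IsPreconnected Ω₁)
    (hΓsub : Γ ⊆ frontier Ω₁)
    (x : EuclideanSpace ℝ (Fin n)) (hx : x ∈ Ω₁ ∩ Ω₂)
    (hG : G = connectedComponentIn (Ω₁ ∩ Ω₂) x)
    (y : EuclideanSpace ℝ (Fin n)) (hy : y ∈ Ω₁ \ Ω₂) :
    (frontier G ∩ Ω₁ ∩ (frontier Ω₂ \ Γ)).Nonempty := by
  have hopen12 : IsOpen (Ω₁ ∩ Ω₂) := hΩ₁open.inter hΩ₂open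
  have hGopen : IsOpen G := hG ▸ hopen12.connectedComponentIn
  have hGsub : G ⊆ Ω₁ ∩ Ω₂ := hG ▸ connectedComponentIn_subset _ _
  have hxG : x ∈ G := hG ▸ mem_connectedComponentIn hx
  -- Step 1: find z ∈ closure G ∩ Ω₁ \ G
  have step1 : ∃ z, z ∈ closure G ∧ z ∈ Ω₁ ∧ z ∉ G := by
    by_contra h
    push_neg at h
    have hcov : Ω₁ ⊆ G ∪ (closure G)ᶜ := by
      intro w hw
      by_cases hwc : w ∈ closure G
      · exact Or.inl (h w hwc hw)
      · exact Or.inr hwc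
    have h1 : (Ω₁ ∩ G).Nonempty := ⟨x, hx.1, hxG⟩
    have h2 : (Ω₁ ∩ (closure G)ᶜ).Nonempty := by
      refine ⟨y, hy.1, fun hc => ?_⟩
      exact hy.2 (hGsub (h y hc hy.1)).2
    obtain ⟨w, hw⟩ := hΩ₁conn G (closure G)ᶜ hGopen isClosed_closure.isOpen_compl
      hcov h1 h2
    exact hw.2.2 (subset_closure hw.2.1)
  obtain ⟨z, hzcl, hz1, hzG⟩ := step1
  -- z ∉ Ω₂
  have hz2 : z ∉ Ω₂ := by
    intro hz2
    have hzin : z ∈ Ω₁ ∩ Ω₂ := ⟨hz1, hz2⟩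
    have hCopen : IsOpen (connectedComponentIn (Ω₁ ∩ Ω₂) z) :=
      hopen12.connectedComponentIn
    have hzC : z ∈ connectedComponentIn (Ω₁ ∩ Ω₂) z := mem_connectedComponentIn hzin
    obtain ⟨w, hwC, hwG⟩ :=
      mem_closure_iff.mp hzcl _ hCopen hzC
    have e1 : connectedComponentIn (Ω₁ ∩ Ω₂) z = connectedComponentIn (Ω₁ ∩ Ω₂) w :=
      connectedComponentIn_eq hwC
    have e2 : connectedComponentIn (Ω₁ ∩ Ω₂) x = connectedComponentIn (Ω₁ ∩ Ω₂) w :=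
      connectedComponentIn_eq (hG ▸ hwG)
    exact hzG (by rw [hG, e2, ← e1]; exact hzC)
  -- assemble
  have hzfG : z ∈ frontier G := by
    rw [frontier, hGopen.interior_eq]; exact ⟨hzcl, hzG⟩
  have hzcl2 : z ∈ closure Ω₂ := closure_mono (fun w hw => (hGsub hw).2) hzcl
  have hzf2 : z ∈ frontier Ω₂ := by
    rw [frontier, hΩ₂open.interior_eq]; exact ⟨hzcl2, hz2⟩
  have hzΓ : z ∉ Γ := by
    intro hzΓ
    have := hΓsub hzΓ
    rw [frontier, hΩ₁open.interior_eq] at this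
    exact this.2 hz1
  exact ⟨z, ⟨hzfG, hz1⟩, hzf2, hzΓ⟩

/-- Lemma A.1: `Ω₁, Ω₂ ⊂ ℝⁿ` bounded connected open sets, `Γ` a nonempty connected
open subset of `∂Ω₁ ∩ ∂Ω₂`, and `G` the connected component of `Ω₁ ∩ Ω₂` whose
boundary contains `Γ`.  If `Ω₁ ≠ Ω₂`, then after possibly interchanging `Ω₁` and
`Ω₂`, the set `∂G ∩ Ω₁ ∩ (∂Ω₂ \ Γ)` is nonempty.  (The smoothness of the boundaries
is replaced by the topological assumptions `Γ ⊆ ∂G` and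
`closure(Ωⱼ \ G) ∩ Γ = ∅`.) -/
theorem boundary_intersection_lemma {n : ℕ}
    (Ω₁ Ω₂ Γ G : Set (EuclideanSpace ℝ (Fin n)))
    (hΩ₁open : IsOpen Ω₁) (hΩ₂open : IsOpen Ω₂)
    (hΩ₁conn : IsConnected Ω₁) (hΩ₂conn : IsConnected Ω₂)
    (hΩ₁bdd : Bornology.IsBounded Ω₁) (hΩ₂bdd : Bornology.IsBounded Ω₂)
    (hΓne : Γ.Nonempty) (hΓconn : IsPreconnected Γ)
    (hΓsub : Γ ⊆ frontier Ω₁ ∩ frontier Ω₂)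
    (hΓopen : ∃ U : Set (EuclideanSpace ℝ (Fin n)),
      IsOpen U ∧ Γ = U ∩ (frontier Ω₁ ∩ frontier Ω₂))
    (hGcomp : ∃ x ∈ Ω₁ ∩ Ω₂, G = connectedComponentIn (Ω₁ ∩ Ω₂) x)
    (hΓG : Γ ⊆ frontier G)
    (hcl₁ : closure (Ω₁ \ G) ∩ Γ = ∅) (hcl₂ : closure (Ω₂ \ G) ∩ Γ = ∅)
    (hne : Ω₁ ≠ Ω₂) :
    (frontier G ∩ Ω₁ ∩ (frontier Ω₂ \ Γ)).Nonempty ∨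
      (frontier G ∩ Ω₂ ∩ (frontier Ω₁ \ Γ)).Nonempty := by
  obtain ⟨x, hx, hG⟩ := hGcomp
  by_cases hsub : Ω₁ ⊆ Ω₂
  · -- then Ω₂ \ Ω₁ is nonempty
    have : ∃ y, y ∈ Ω₂ \ Ω₁ := by
      by_contra h
      push_neg at h
      exact hne (Set.Subset.antisymm hsub (fun w hw => by
        by_contra hw1
        exact (h w ⟨hw, hw1⟩)))
    obtain ⟨y, hy⟩ := this
    right
    refine aux_boundary Ω₂ Ω₁ Γ G hΩ₂open hΩ₁open hΩ₂conn.isPreconnected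
      (fun p hp => (hΓsub hp).2) x ?_ ?_ y hy
    · rw [Set.inter_comm]; exact hx
    · rw [Set.inter_comm]; exact hG
  · obtain ⟨y, hy1, hy2⟩ := Set.not_subset.mp hsub
    left
    exact aux_boundary Ω₁ Ω₂ Γ G hΩ₁open hΩ₂open hΩ₁conn.isPreconnected
      (fun p hp => (hΓsub hp).1) x hx hG y ⟨hy1, hy2⟩
end

section
/- Let Ω₁, Ω₂ ⊂ ℝⁿ be open sets with Ω₁ \ Ω₂ ≠ ∅, Γ ⊆ ∂Ω₁ ∩ ∂Ω₂, and let G be a connected component of Ω₁ ∩ Ω₂ with Γ ⊆ ∂G and closure(Ω₁ \ G) ∩ Γ = ∅. Then ∂(Ω₁ \ G) ⊆ (∂G ∩ (∂Ω₂ \ Γ)) ∪ (∂Ω₁ \ Γ). -/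
/-- Inclusion (A.1) from the proof of Lemma A.1:
`∂(Ω₁ \ G) ⊆ (∂G ∩ (∂Ω₂ \ Γ)) ∪ (∂Ω₁ \ Γ)`. -/
theorem frontier_diff_subset {n : ℕ}
    (Ω₁ Ω₂ Γ G : Set (EuclideanSpace ℝ (Fin n)))
    (hΩ₁open : IsOpen Ω₁) (hΩ₂open : IsOpen Ω₂)
    (hdiff : (Ω₁ \ Ω₂).Nonempty)
    (hΓsub : Γ ⊆ frontier Ω₁ ∩ frontier Ω₂)
    (hGcomp : ∃ x ∈ Ω₁ ∩ Ω₂, G = connectedComponentIn (Ω₁ ∩ Ω₂) x)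
    (hΓG : Γ ⊆ frontier G)
    (hcl : closure (Ω₁ \ G) ∩ Γ = ∅) :
    frontier (Ω₁ \ G) ⊆ (frontier G ∩ (frontier Ω₂ \ Γ)) ∪ (frontier Ω₁ \ Γ) := by
  obtain ⟨x₀, hx₀, hGdef⟩ := hGcomp
  have hsopen : IsOpen (Ω₁ ∩ Ω₂) := hΩ₁open.inter hΩ₂open
  have hGopen : IsOpen G := hGdef ▸ hsopen.connectedComponentIn
  have hGsub : G ⊆ Ω₁ ∩ Ω₂ := hGdef ▸ connectedComponentIn_subset _ _
  intro x hx
  have hxcl : x ∈ closure (Ω₁ \ G) := hx.1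
  have hxΓ : x ∉ Γ := fun hΓ => Set.eq_empty_iff_forall_notMem.mp hcl x ⟨hxcl, hΓ⟩
  by_cases hxΩ₁ : x ∈ Ω₁
  · -- x ∈ closure G : otherwise Ω₁ \ closure G is an open nbhd inside Ω₁ \ G
    have hxclG : x ∈ closure G := by
      by_contra h
      have hopen : IsOpen (Ω₁ \ closure G) := hΩ₁open.sdiff isClosed_closure
      have hsub : Ω₁ \ closure G ⊆ Ω₁ \ G := fun y hy => ⟨hy.1, fun hG => hy.2 (subset_closure hG)⟩
      exact hx.2 (interior_maximal hsub hopen ⟨hxΩ₁, h⟩)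
    have hxG : x ∉ G := by
      intro hG
      obtain ⟨y, hy⟩ := mem_closure_iff.mp hxcl G hGopen hG
      exact hy.2.2 hy.1
    have hxfG : x ∈ frontier G := ⟨hxclG, fun h => hxG (interior_subset h)⟩
    have hxΩ₂ : x ∉ Ω₂ := by
      intro hΩ₂
      have hxs : x ∈ Ω₁ ∩ Ω₂ := ⟨hxΩ₁, hΩ₂⟩
      have hC : IsOpen (connectedComponentIn (Ω₁ ∩ Ω₂) x) := hsopen.connectedComponentIn
      obtain ⟨y, hy⟩ := mem_closure_iff.mp hxclG _ hC (mem_connectedComponentIn hxs)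
      have : connectedComponentIn (Ω₁ ∩ Ω₂) x = G := by
        rw [hGdef]
        rw [hGdef] at hy
        exact (connectedComponentIn_eq hy.1).trans (connectedComponentIn_eq hy.2).symm
      exact hxG (this ▸ mem_connectedComponentIn hxs)
    have hxclΩ₂ : x ∈ closure Ω₂ :=
      closure_mono (fun y hy => (hGsub hy).2) hxclG
    exact Or.inl ⟨hxfG, ⟨hxclΩ₂, fun h => hxΩ₂ (hΩ₂open.interior_eq ▸ h)⟩, hxΓ⟩
  · have hxclΩ₁ : x ∈ closure Ω₁ := closure_mono Set.diff_subset hxcl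
    exact Or.inr ⟨⟨hxclΩ₁, fun h => hxΩ₁ (hΩ₁open.interior_eq ▸ h)⟩, hxΓ⟩
end
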